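/- Let (𝒜, f, g, 𝔢) be a right-liberating representation of (A, B, ρ, ψ). Let ⟨A, B⟩ denote the subalgebra of 𝒜 generated by f(A) and g(B). Then 𝔢(⟨A, B⟩) = 𝔢(g(B)) as subsets of 𝒜. -/

import Mathlib

namespace RLproof

variable {A B 𝒜 : Type*} [Ring A] [Algebra ℂ A] [Ring B] [Algebra ℂ B]
    [Ring 𝒜] [Algebra ℂ 𝒜]

/-- centered copy of `A` inside `𝒜`. -/
def cw (f : A →ₐ[ℂ] 𝒜) (g : B →ₐ[ℂ] 𝒜) (ρ : A →ₗ[ℂ] B) (a : A) : 𝒜 := f a - g (ρ a)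

/-- centered copy of `B` inside `𝒜`. -/
def dw (f : A →ₐ[ℂ] 𝒜) (g : B →ₐ[ℂ] 𝒜) (ψ : B →ₗ[ℂ] A) (b : B) : 𝒜 := g b - f (ψ b)

/-- inner words: `c a₁ * g b₁ * c a₂ * ⋯ * c aₙ`. -/
def inw (f : A →ₐ[ℂ] 𝒜) (g : B →ₐ[ℂ] 𝒜) (ρ : A →ₗ[ℂ] B) : A → List (B × A) → 𝒜
  | a, [] => cw f g ρ a
  | a, (β, a') :: l => cw f g ρ a * (g β * inw f g ρ a' l)

/-- alternating heads: `(c x₁ * d b₁) * ⋯ * (c xⱼ * d bⱼ)`. -/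
def hd (f : A →ₐ[ℂ] 𝒜) (g : B →ₐ[ℂ] 𝒜) (ρ : A →ₗ[ℂ] B) (ψ : B →ₗ[ℂ] A)
    (h : List (A × B)) : 𝒜 := (h.map fun p => cw f g ρ p.1 * dw f g ψ p.2).prod

/-- elements whose `e`-image agrees with the `e`-image of some `g b`. -/
def SS (g : B →ₐ[ℂ] 𝒜) (e : 𝒜 →ₗ[ℂ] 𝒜) : Submodule ℂ 𝒜 where
  carrier := {x | ∃ b, e x = e (g b)}
  add_mem' := by
    rintro x y ⟨bx, hx⟩ ⟨by', hy⟩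
    exact ⟨bx + by', by simp [hx, hy]⟩
  zero_mem' := ⟨0, by simp⟩
  smul_mem' := by
    rintro r x ⟨b, hx⟩
    exact ⟨r • b, by rw [map_smul, hx, map_smul, map_smul]⟩

section Lemmas
variable {f : A →ₐ[ℂ] 𝒜} {g : B →ₐ[ℂ] 𝒜} {ρ : A →ₗ[ℂ] B} {ψ : B →ₗ[ℂ] A}
  {e : 𝒜 →ₗ[ℂ] 𝒜}

lemma SS_of_e0 {x : 𝒜} (hx : e x = 0) : x ∈ SS g e :=
  ⟨0, by simp [hx]⟩

lemma hd_nil : hd f g ρ ψ ([] : List (A × B)) = 1 := rfl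

lemma hd_app (h : List (A × B)) (a : A) (b : B) :
    hd f g ρ ψ (h ++ [(a, b)]) = hd f g ρ ψ h * (cw f g ρ a * dw f g ψ b) := by
  simp [hd]

lemma inw_concat (a : A) (l : List (B × A)) (β : B) (a' : A) (l' : List (B × A)) :
    inw f g ρ a l * (g β * inw f g ρ a' l') = inw f g ρ a (l ++ (β, a') :: l') := by
  induction l generalizing a with
  | nil => rfl
  | cons p t ih =>
    obtain ⟨γ, a₂⟩ := p
    simp only [inw, List.cons_append, mul_assoc, ih]

/-- conversion of the killing axiom to list form. -/
lemma AX
    (hk : ∀ (n : ℕ) (a : Fin (n + 1) → A) (b : Fin n → B),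
      e ((List.ofFn (fun i : Fin n =>
          (f (a i.castSucc) - g (ρ (a i.castSucc))) * (g (b i) - f (ψ (b i))))).prod *
        (f (a (Fin.last n)) - g (ρ (a (Fin.last n))))) = 0)
    (L : List (A × B)) (a : A) : e (hd f g ρ ψ L * cw f g ρ a) = 0 := by
  have key := hk L.length
    (fun i => if hi : (i : ℕ) < L.length then (L.get ⟨i, hi⟩).1 else a)
    (fun i => (L.get i).2)
  have h1 : (List.ofFn (fun i : Fin L.length =>
      (f ((fun i : Fin (L.length+1) =>
            if hi : (i : ℕ) < L.length then (L.get ⟨i, hi⟩).1 else a) i.castSucc) -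
        g (ρ ((fun i : Fin (L.length+1) =>
            if hi : (i : ℕ) < L.length then (L.get ⟨i, hi⟩).1 else a) i.castSucc))) *
      (g ((L.get i).2) - f (ψ ((L.get i).2)))))
      = L.map (fun p => cw f g ρ p.1 * dw f g ψ p.2) := by
    rw [← List.ofFn_getElem_eq_map]
    congr 1
    funext i
    simp only [Fin.coe_castSucc, dif_pos i.isLt, cw, dw]
    congr 1
  have h2 : (fun i : Fin (L.length+1) =>
      if hi : (i : ℕ) < L.length then (L.get ⟨i, hi⟩).1 else a) (Fin.last L.length) = a := by
    simp
  rw [h1] at key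
  simp only at h2
  rw [h2] at key
  exact key

variable (hbi : ∀ (b₁ b₂ : B) (x : 𝒜), e (g b₁ * x * g b₂) = g b₁ * e x * g b₂)
include hbi

lemma e_gl (b : B) (x : 𝒜) : e (g b * x) = g b * e x := by
  have := hbi b 1 x; simpa using this

lemma e_gr (b : B) (x : 𝒜) : e (x * g b) = e x * g b := by
  have := hbi 1 b x; simpa using this

lemma SS_gl {x : 𝒜} (hx : x ∈ SS g e) (b : B) : g b * x ∈ SS g e := by
  obtain ⟨γ, hγ⟩ := hx
  exact ⟨b * γ, by rw [e_gl hbi, hγ, ← e_gl hbi, ← map_mul]⟩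

lemma SS_gr {x : 𝒜} (hx : x ∈ SS g e) (b : B) : x * g b ∈ SS g e := by
  obtain ⟨γ, hγ⟩ := hx
  exact ⟨γ * b, by rw [e_gr hbi, hγ, ← e_gr hbi, ← map_mul]⟩

variable (hax : ∀ (L : List (A × B)) (a : A), e (hd f g ρ ψ L * cw f g ρ a) = 0)
include hax

/-- the main induction. -/
theorem master : ∀ N : ℕ,
    (∀ (h : List (A × B)) (a : A) (l : List (B × A)),
        h.length + 1 + l.length = N → hd f g ρ ψ h * inw f g ρ a l ∈ SS g e) ∧
    (∀ (h : List (A × B)) (β : B) (a : A) (l : List (B × A)),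
        h.length + 1 + l.length = N → hd f g ρ ψ h * (g β * inw f g ρ a l) ∈ SS g e) ∧
    (∀ (h : List (A × B)) (β : B), h.length = N → hd f g ρ ψ h * g β ∈ SS g e) := by
  intro N
  induction N using Nat.strong_induction_on with
  | _ N IH =>
  have P1 : ∀ (l : List (B × A)) (h : List (A × B)) (a : A),
      h.length + 1 + l.length = N → hd f g ρ ψ h * inw f g ρ a l ∈ SS g e := by
    intro l
    induction l with
    | nil =>
      intro h a _
      exact SS_of_e0 (hax h a)
    | cons p l' ihl =>
      obtain ⟨β, a'⟩ := p
      intro h a hN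
      simp only [List.length_cons] at hN
      match l' with
      | [] =>
        have key : hd f g ρ ψ h * inw f g ρ a [(β, a')]
            = hd f g ρ ψ (h ++ [(a, β)]) * inw f g ρ a' []
            + hd f g ρ ψ h * cw f g ρ (a * (ψ β * a'))
            - hd f g ρ ψ h * (g (ρ a) * cw f g ρ (ψ β * a'))
            + hd f g ρ ψ h * g (ρ (a * (ψ β * a')) - ρ a * ρ (ψ β * a'))
            - hd f g ρ ψ h * cw f g ρ (a * ψ β) * g (ρ a')
            + hd f g ρ ψ h * (g (ρ a) * cw f g ρ (ψ β)) * g (ρ a')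
            - hd f g ρ ψ h * g ((ρ (a * ψ β) - ρ a * ρ (ψ β)) * ρ a') := by
          rw [hd_app]
          show hd f g ρ ψ h * (cw f g ρ a * (g β * cw f g ρ a')) = _
          simp only [inw, cw, dw, map_mul, map_sub]
          noncomm_ring
        rw [key]
        have t1 : hd f g ρ ψ (h ++ [(a, β)]) * inw f g ρ a' [] ∈ SS g e :=
          ihl (h ++ [(a, β)]) a' (by simp at hN ⊢; omega)
        have t2 : hd f g ρ ψ h * cw f g ρ (a * (ψ β * a')) ∈ SS g e :=
          SS_of_e0 (hax h _)
        have t3 : hd f g ρ ψ h * (g (ρ a) * cw f g ρ (ψ β * a')) ∈ SS g e :=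
          (IH (h.length + 1) (by omega)).2.1 h (ρ a) (ψ β * a') [] (by simp)
        have t4 : hd f g ρ ψ h * g (ρ (a * (ψ β * a')) - ρ a * ρ (ψ β * a')) ∈ SS g e :=
          (IH h.length (by omega)).2.2 h _ rfl
        have t5 : hd f g ρ ψ h * cw f g ρ (a * ψ β) * g (ρ a') ∈ SS g e :=
          SS_gr hbi (SS_of_e0 (hax h _)) _
        have t6 : hd f g ρ ψ h * (g (ρ a) * cw f g ρ (ψ β)) * g (ρ a') ∈ SS g e := by
          refine SS_gr hbi ?_ _
          exact (IH (h.length + 1) (by omega)).2.1 h (ρ a) (ψ β) [] (by simp)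
        have t7 : hd f g ρ ψ h * g ((ρ (a * ψ β) - ρ a * ρ (ψ β)) * ρ a') ∈ SS g e :=
          (IH h.length (by omega)).2.2 h _ rfl
        exact sub_mem (add_mem (sub_mem (add_mem (sub_mem (add_mem t1 t2) t3) t4) t5) t6) t7
      | (β', a'') :: l'' =>
        have key : hd f g ρ ψ h * inw f g ρ a ((β, a') :: (β', a'') :: l'')
            = hd f g ρ ψ (h ++ [(a, β)]) * inw f g ρ a' ((β', a'') :: l'')
            + hd f g ρ ψ h * inw f g ρ (a * (ψ β * a')) ((β', a'') :: l'')
            - hd f g ρ ψ h * (g (ρ a) * inw f g ρ (ψ β * a') ((β', a'') :: l''))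
            + hd f g ρ ψ h *
                (g ((ρ (a * (ψ β * a')) - ρ a * ρ (ψ β * a')) * β') * inw f g ρ a'' l'')
            - hd f g ρ ψ h * inw f g ρ (a * ψ β) ((ρ a' * β', a'') :: l'')
            + hd f g ρ ψ h * (g (ρ a) * inw f g ρ (ψ β) ((ρ a' * β', a'') :: l''))
            - hd f g ρ ψ h *
                (g ((ρ (a * ψ β) - ρ a * ρ (ψ β)) * (ρ a' * β')) * inw f g ρ a'' l'') := by
          rw [hd_app]
          show hd f g ρ ψ h *
              (cw f g ρ a * (g β * (cw f g ρ a' * (g β' * inw f g ρ a'' l'')))) = _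
          simp only [inw, cw, dw, map_mul, map_sub]
          noncomm_ring
        rw [key]
        simp only [List.length_cons] at hN
        have t1 := ihl (h ++ [(a, β)]) a'
          (by simp only [List.length_append, List.length_cons, List.length_nil]; omega)
        have t2 := (IH (h.length + 1 + (l''.length + 1)) (by omega)).1 h
          (a * (ψ β * a')) ((β', a'') :: l'') (by simp)
        have t3 := (IH (h.length + 1 + (l''.length + 1)) (by omega)).2.1 h (ρ a)
          (ψ β * a') ((β', a'') :: l'') (by simp)
        have t4 := (IH (h.length + 1 + l''.length) (by omega)).2.1 h
          ((ρ (a * (ψ β * a')) - ρ a * ρ (ψ β * a')) * β') a'' l'' rfl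
        have t5 := (IH (h.length + 1 + (l''.length + 1)) (by omega)).1 h
          (a * ψ β) ((ρ a' * β', a'') :: l'') (by simp)
        have t6 := (IH (h.length + 1 + (l''.length + 1)) (by omega)).2.1 h (ρ a)
          (ψ β) ((ρ a' * β', a'') :: l'') (by simp)
        have t7 := (IH (h.length + 1 + l''.length) (by omega)).2.1 h
          ((ρ (a * ψ β) - ρ a * ρ (ψ β)) * (ρ a' * β')) a'' l'' rfl
        exact sub_mem (add_mem (sub_mem (add_mem (sub_mem (add_mem t1 t2) t3) t4) t5) t6) t7
  refine ⟨fun h a l => P1 l h a, ?_⟩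
  have P2 : ∀ (h : List (A × B)) (β : B) (a : A) (l : List (B × A)),
      h.length + 1 + l.length = N → hd f g ρ ψ h * (g β * inw f g ρ a l) ∈ SS g e := by
    intro h
    induction h using List.reverseRecOn with
    | nil =>
      intro β a l hN
      have h0 := P1 l [] a (by simpa using hN)
      rw [hd_nil, one_mul] at h0 ⊢
      exact SS_gl hbi h0 β
    | append_singleton h' p ihh =>
      obtain ⟨x, b⟩ := p
      intro β a l hN
      simp only [List.length_append, List.length_cons, List.length_nil] at hN
      have key : hd f g ρ ψ (h' ++ [(x, b)]) * (g β * inw f g ρ a l)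
          = hd f g ρ ψ h' * inw f g ρ x ((b * β, a) :: l)
          - hd f g ρ ψ h' * inw f g ρ (x * ψ b) ((β, a) :: l)
          + hd f g ρ ψ h' * (g (ρ x) * inw f g ρ (ψ b) ((β, a) :: l))
          - hd f g ρ ψ h' * (g ((ρ (x * ψ b) - ρ x * ρ (ψ b)) * β) * inw f g ρ a l) := by
        rw [hd_app]
        simp only [inw, cw, dw, map_mul, map_sub]
        noncomm_ring
      rw [key]
      have u1 := P1 ((b * β, a) :: l) h' x (by simp; omega)
      have u2 := P1 ((β, a) :: l) h' (x * ψ b) (by simp; omega)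
      have u3 := ihh (ρ x) (ψ b) ((β, a) :: l) (by simp; omega)
      have u4 := (IH (h'.length + 1 + l.length) (by omega)).2.1 h'
        ((ρ (x * ψ b) - ρ x * ρ (ψ b)) * β) a l rfl
      exact sub_mem (add_mem (sub_mem u1 u2) u3) u4
  refine ⟨P2, ?_⟩
  intro h
  induction h using List.reverseRecOn with
  | nil =>
    intro β _
    rw [hd_nil, one_mul]
    exact ⟨β, rfl⟩
  | append_singleton h' p ihh =>
    obtain ⟨x, b⟩ := p
    intro β hN
    simp only [List.length_append, List.length_cons, List.length_nil] at hN
    have key : hd f g ρ ψ (h' ++ [(x, b)]) * g β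
        = (hd f g ρ ψ h' * cw f g ρ x) * g (b * β)
        - (hd f g ρ ψ h' * cw f g ρ (x * ψ b)) * g β
        + (hd f g ρ ψ h' * (g (ρ x) * cw f g ρ (ψ b))) * g β
        - hd f g ρ ψ h' * g ((ρ (x * ψ b) - ρ x * ρ (ψ b)) * β) := by
      rw [hd_app]
      simp only [cw, dw, map_mul, map_sub]
      noncomm_ring
    rw [key]
    have m1 : (hd f g ρ ψ h' * cw f g ρ x) * g (b * β) ∈ SS g e :=
      SS_gr hbi (SS_of_e0 (hax h' x)) _
    have m2 : (hd f g ρ ψ h' * cw f g ρ (x * ψ b)) * g β ∈ SS g e :=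
      SS_gr hbi (SS_of_e0 (hax h' _)) _
    have m3 : (hd f g ρ ψ h' * (g (ρ x) * cw f g ρ (ψ b))) * g β ∈ SS g e := by
      refine SS_gr hbi ?_ _
      exact P2 h' (ρ x) (ψ b) [] (by simp; omega)
    have m4 : hd f g ρ ψ h' * g ((ρ (x * ψ b) - ρ x * ρ (ψ b)) * β) ∈ SS g e :=
      (IH h'.length (by omega)).2.2 h' _ rfl
    exact sub_mem (add_mem (sub_mem m1 m2) m3) m4

end Lemmas

section Assemble
variable (f : A →ₐ[ℂ] 𝒜) (g : B →ₐ[ℂ] 𝒜) (ρ : A →ₗ[ℂ] B)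

/-- spanning words -/
def WS : Set 𝒜 :=
  {x | ∃ b, x = g b} ∪ {x | ∃ b₀ a l b₁, x = g b₀ * (inw f g ρ a l * g b₁)}

lemma WS_mul : ∀ x ∈ WS f g ρ, ∀ y ∈ WS f g ρ, x * y ∈ WS f g ρ := by
  rintro x (⟨b, rfl⟩ | ⟨b₀, a, l, b₁, rfl⟩) y (⟨b', rfl⟩ | ⟨b₂, a', l', b₃, rfl⟩)
  · exact Or.inl ⟨b * b', (map_mul g b b').symm⟩
  · refine Or.inr ⟨b * b₂, a', l', b₃, ?_⟩
    rw [map_mul, mul_assoc]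
  · refine Or.inr ⟨b₀, a, l, b₁ * b', ?_⟩
    rw [map_mul, mul_assoc, mul_assoc]
  · refine Or.inr ⟨b₀, a, l ++ (b₁ * b₂, a') :: l', b₃, ?_⟩
    rw [← inw_concat, map_mul]
    noncomm_ring

lemma adjoin_le_spanWS :
    ∀ x ∈ Algebra.adjoin ℂ (Set.range ⇑f ∪ Set.range ⇑g),
      x ∈ Submodule.span ℂ (WS f g ρ) := by
  intro x hx
  induction hx using Algebra.adjoin_induction with
  | mem z hz =>
    rcases hz with ⟨a, rfl⟩ | ⟨b, rfl⟩
    · have h1 : (g 1 : 𝒜) * (inw f g ρ a [] * g 1) + g (ρ a) = f a := by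
        simp [inw, cw]
      rw [← h1]
      exact add_mem
        (Submodule.subset_span (Or.inr ⟨1, a, [], 1, rfl⟩))
        (Submodule.subset_span (Or.inl ⟨ρ a, rfl⟩))
    · exact Submodule.subset_span (Or.inl ⟨b, rfl⟩)
  | algebraMap r =>
    have : (algebraMap ℂ 𝒜) r = r • g 1 := by
      rw [map_one, Algebra.algebraMap_eq_smul_one]
    rw [this]
    exact Submodule.smul_mem _ r (Submodule.subset_span (Or.inl ⟨1, rfl⟩))
  | add x y hx hy ihx ihy => exact add_mem ihx ihy
  | mul x y hx hy ihx ihy =>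
    have hle : Submodule.span ℂ (WS f g ρ) * Submodule.span ℂ (WS f g ρ)
        ≤ Submodule.span ℂ (WS f g ρ) := by
      rw [Submodule.span_mul_span]
      refine Submodule.span_le.mpr ?_
      rintro z ⟨u, hu, v, hv, rfl⟩
      exact Submodule.subset_span (WS_mul f g ρ u hu v hv)
    exact hle (Submodule.mul_mem_mul ihx ihy)

end Assemble

end RLproof

/-- A *right-liberating representation* of `(A, B, ρ, ψ)`: algebra homomorphisms
`f : A → 𝒜`, `g : B → 𝒜` and a linear map `e : 𝒜 → 𝒜` which is a `g(B)`-bimodule map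
and kills every alternating product `(f a₁ - g (ρ a₁))(g b₁ - f (ψ b₁)) ⋯ (f aₙ - g (ρ aₙ))`. -/
def RightLiberatingRep {A B 𝒜 : Type*} [Ring A] [Algebra ℂ A] [Ring B] [Algebra ℂ B]
    [Ring 𝒜] [Algebra ℂ 𝒜]
    (f : A →ₐ[ℂ] 𝒜) (g : B →ₐ[ℂ] 𝒜) (e : 𝒜 →ₗ[ℂ] 𝒜)
    (ρ : A →ₗ[ℂ] B) (ψ : B →ₗ[ℂ] A) : Prop :=
  (∀ (b₁ b₂ : B) (x : 𝒜), e (g b₁ * x * g b₂) = g b₁ * e x * g b₂) ∧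
  (∀ (n : ℕ) (a : Fin (n + 1) → A) (b : Fin n → B),
    e ((List.ofFn (fun i : Fin n =>
        (f (a i.castSucc) - g (ρ (a i.castSucc))) * (g (b i) - f (ψ (b i))))).prod *
      (f (a (Fin.last n)) - g (ρ (a (Fin.last n))))) = 0)

theorem stmt12 {A B 𝒜 : Type*} [Ring A] [Algebra ℂ A] [Ring B] [Algebra ℂ B]
    [Ring 𝒜] [Algebra ℂ 𝒜]
    (f : A →ₐ[ℂ] 𝒜) (g : B →ₐ[ℂ] 𝒜) (e : 𝒜 →ₗ[ℂ] 𝒜)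
    (ρ : A →ₗ[ℂ] B) (ψ : B →ₗ[ℂ] A)
    (h : RightLiberatingRep f g e ρ ψ) :
    e '' ((Algebra.adjoin ℂ (Set.range ⇑f ∪ Set.range ⇑g) : Subalgebra ℂ 𝒜) : Set 𝒜) =
      e '' (Set.range ⇑g) := by
  obtain ⟨hbi, hk⟩ := h
  have hax := RLproof.AX (f := f) (g := g) (ρ := ρ) (ψ := ψ) (e := e) hk
  -- every spanning word lies in SS
  have hWS : RLproof.WS f g ρ ⊆ (RLproof.SS g e : Set 𝒜) := by
    rintro x (⟨b, rfl⟩ | ⟨b₀, a, l, b₁, rfl⟩)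
    · exact ⟨b, rfl⟩
    · have h0 := (RLproof.master hbi hax (1 + l.length)).1 [] a l (by simp)
      rw [RLproof.hd_nil, one_mul] at h0
      exact RLproof.SS_gl hbi (RLproof.SS_gr hbi h0 b₁) b₀
  have hspan : Submodule.span ℂ (RLproof.WS f g ρ) ≤ RLproof.SS g e :=
    Submodule.span_le.mpr hWS
  apply Set.Subset.antisymm
  · rintro _ ⟨x, hx, rfl⟩
    obtain ⟨γ, hγ⟩ := hspan (RLproof.adjoin_le_spanWS f g ρ x hx)
    exact ⟨g γ, ⟨γ, rfl⟩, hγ.symm⟩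
  · rintro _ ⟨_, ⟨b, rfl⟩, rfl⟩
    exact ⟨g b, Algebra.subset_adjoin (Or.inr ⟨b, rfl⟩), rfl⟩
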